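/- Let Q be a left quasigroup, α a congruence of Q, and N ∈ Norm(Q) an admissible subgroup (a normal subgroup N of LMlt(Q) with Dis_{O_N} ≤ N). Then the relations α and O_N permute: α ∘ O_N = O_N ∘ α. -/

import Mathlib

/-- The left multiplication group of a left quasigroup. -/
def LMlt {Q : Type*} (L : Q → Equiv.Perm Q) : Subgroup (Equiv.Perm Q) :=
  Subgroup.closure (Set.range L)

/-- The relative displacement group Dis_r : the normal closure in LMlt(Q) of
{L_a L_b⁻¹ : r a b}. -/
def disRel {Q : Type*} (L : Q → Equiv.Perm Q) (r : Q → Q → Prop) :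
    Subgroup (Equiv.Perm Q) :=
  Subgroup.closure
    {x : Equiv.Perm Q | ∃ g ∈ LMlt L, ∃ a b : Q, r a b ∧ x = g * (L a * (L b)⁻¹) * g⁻¹}

/-- For a congruence α and an admissible subgroup N, the relations α and O_N
permute: α ∘ O_N = O_N ∘ α. -/
theorem stmt_8 {Q : Type*} (mul ld : Q → Q → Q)
    (h1 : ∀ x y, mul x (ld x y) = y) (h2 : ∀ x y, ld x (mul x y) = y)
    (L : Q → Equiv.Perm Q) (hL : ∀ a b : Q, L a b = mul a b)
    (r : Q → Q → Prop) (hequiv : Equivalence r)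
    (hcong : ∀ a b c d, r a c → r b d → r (mul a b) (mul c d) ∧ r (ld a b) (ld c d))
    (N : Subgroup (Equiv.Perm Q)) (hle : N ≤ LMlt L)
    (hnorm : ∀ g ∈ LMlt L, ∀ n ∈ N, g * n * g⁻¹ ∈ N)
    (hadm : disRel L (fun a b => ∃ n ∈ N, n b = a) ≤ N) :
    ∀ a b : Q, (∃ c, r a c ∧ ∃ n ∈ N, n b = c) ↔ (∃ c, (∃ n ∈ N, n c = a) ∧ r c b) := by
  have key : ∀ g ∈ LMlt L, ∀ x y : Q, r x y ↔ r (g x) (g y) := by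
    intro g hg
    induction hg using Subgroup.closure_induction with
    | mem z hz =>
      obtain ⟨a, rfl⟩ := hz
      intro x y
      constructor
      · intro hxy
        have := (hcong a x a y (hequiv.refl a) hxy).1
        simpa [hL] using this
      · intro hxy
        have := (hcong a (L a x) a (L a y) (hequiv.refl a) hxy).2
        simpa [hL, h2] using this
    | one => simp
    | mul u v hu hv ihu ihv =>
      intro x y
      rw [ihv x y, ihu (v x) (v y)]
      simp
    | inv u hu ihu =>
      intro x y
      have := ihu (u⁻¹ x) (u⁻¹ y)
      simp only [← Equiv.Perm.mul_apply, mul_inv_cancel, Equiv.Perm.one_apply] at this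
      exact this.symm
  intro a b
  constructor
  · rintro ⟨c, hac, n, hn, rfl⟩
    refine ⟨n⁻¹ a, ⟨n, hn, by simp⟩, ?_⟩
    have := (key n⁻¹ ((LMlt L).inv_mem (hle hn)) a (n b)).mp hac
    simpa using this
  · rintro ⟨c, ⟨n, hn, rfl⟩, hcb⟩
    exact ⟨n b, (key n (hle hn) c b).mp hcb, n, hn, rfl⟩
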